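/- Let Λ₁, Λ₂, D, K, M be symmetric positive definite real n×n matrices and let v_new : [0,∞) → ℝⁿ be a C¹ external velocity input. Let y₁, y₂ : [0,∞) → ℝⁿ be C² curves and let the object velocity be v = v_new − y₁' − y₂' with interaction force F = M·v', and suppose Λᵢ·yᵢ'' + D·yᵢ' + K·yᵢ = F for i = 1, 2. Then the total storage function S_tot = Σᵢ [½·yᵢ'ᵀΛᵢ·yᵢ' + ½·yᵢᵀK·yᵢ] + ½·vᵀM·v satisfies S_tot'(t) ≤ v_new(t)ᵀF(t) for all t; i.e., the new input–output pair (v_new, F) of the interconnected two-AM-plus-object system is passive. (The claim of Fig. 3(a)/Section III.D.1 that the interconnection exposes a new passive port, enabling modular addition of further AMs.) -/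

import Mathlib

open Matrix Filter Topology

private lemma dot_hasDerivAt {n : ℕ} (A : Matrix (Fin n) (Fin n) ℝ)
    {f g : ℝ → Fin n → ℝ} {f' g' : Fin n → ℝ} {t : ℝ}
    (hf : HasDerivAt f f' t) (hg : HasDerivAt g g' t) :
    HasDerivAt (fun s => f s ⬝ᵥ (A *ᵥ g s))
      (f' ⬝ᵥ (A *ᵥ g t) + f t ⬝ᵥ (A *ᵥ g')) t := by
  have key : HasDerivAt (fun s => ∑ i, f s i * ∑ j, A i j * g s j)
      (∑ i, (f' i * (∑ j, A i j * g t j) + f t i * ∑ j, A i j * g' j)) t := by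
    apply HasDerivAt.fun_sum
    intro i _
    exact (hasDerivAt_pi.1 hf i).mul
      (HasDerivAt.fun_sum fun j _ => (hasDerivAt_pi.1 hg j).const_mul (A i j))
  have h1 : (fun s => f s ⬝ᵥ (A *ᵥ g s)) = fun s => ∑ i, f s i * ∑ j, A i j * g s j := by
    funext s; simp [dotProduct, mulVec]
  have h2 : f' ⬝ᵥ (A *ᵥ g t) + f t ⬝ᵥ (A *ᵥ g')
      = ∑ i, (f' i * (∑ j, A i j * g t j) + f t i * ∑ j, A i j * g' j) := by
    simp [dotProduct, mulVec, Finset.sum_add_distrib]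
  rw [h1, h2]; exact key

private lemma dot_symm_swap {n : ℕ} {A : Matrix (Fin n) (Fin n) ℝ}
    (hA : A.IsHermitian) (x y : Fin n → ℝ) : x ⬝ᵥ (A *ᵥ y) = y ⬝ᵥ (A *ᵥ x) := by
  have hAt : Aᵀ = A := by simpa using hA.eq
  rw [dotProduct_mulVec]
  conv_lhs => rw [← hAt, vecMul_transpose]
  rw [dotProduct_comm]

/-- The interconnected two-AM-plus-object system exposes a new
passive port (Fig. 3(a) / Section III.D.1).  With object velocity
`v = v_new − y₁' − y₂'` and interaction force `F = M v'`, the total storage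
function `S_tot = Σᵢ [½ yᵢ'ᵀ Λᵢ yᵢ' + ½ yᵢᵀ K yᵢ] + ½ vᵀ M v` satisfies
`S_tot'(t) ≤ v_new(t)ᵀ F(t)` for all `t ≥ 0`. -/
theorem stmt_15 {n : ℕ} (Λ₁ Λ₂ D K M : Matrix (Fin n) (Fin n) ℝ)
    (hΛ₁ : Λ₁.PosDef) (hΛ₂ : Λ₂.PosDef) (hD : D.PosDef) (hK : K.PosDef)
    (hM : M.PosDef)
    (vnew : ℝ → Fin n → ℝ) (hvnew : ContDiff ℝ 1 vnew)
    (y₁ y₂ : ℝ → Fin n → ℝ) (hy₁ : ContDiff ℝ 2 y₁) (hy₂ : ContDiff ℝ 2 y₂)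
    (v F : ℝ → Fin n → ℝ)
    (hv : v = fun t => vnew t - deriv y₁ t - deriv y₂ t)
    (hF : ∀ t : ℝ, F t = M *ᵥ (deriv v t))
    (hODE₁ : ∀ t : ℝ, 0 ≤ t →
      Λ₁ *ᵥ (deriv (deriv y₁) t) + D *ᵥ (deriv y₁ t) + K *ᵥ (y₁ t) = F t)
    (hODE₂ : ∀ t : ℝ, 0 ≤ t →
      Λ₂ *ᵥ (deriv (deriv y₂) t) + D *ᵥ (deriv y₂ t) + K *ᵥ (y₂ t) = F t) :
    ∀ Stot : ℝ → ℝ,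
      Stot = (fun t =>
          ((1 / 2) * (deriv y₁ t ⬝ᵥ (Λ₁ *ᵥ deriv y₁ t))
            + (1 / 2) * (y₁ t ⬝ᵥ (K *ᵥ y₁ t)))
          + ((1 / 2) * (deriv y₂ t ⬝ᵥ (Λ₂ *ᵥ deriv y₂ t))
            + (1 / 2) * (y₂ t ⬝ᵥ (K *ᵥ y₂ t)))
          + (1 / 2) * (v t ⬝ᵥ (M *ᵥ v t))) →
      ∀ t : ℝ, 0 ≤ t → deriv Stot t ≤ vnew t ⬝ᵥ F t := by
  intro Stot hStot t ht
  -- regularity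
  have hy₁d : ContDiff ℝ 1 (deriv y₁) := by
    have h := hy₁
    rw [show (2 : WithTop ℕ∞) = 1 + 1 from by norm_num, contDiff_succ_iff_deriv] at h
    exact h.2.2
  have hy₂d : ContDiff ℝ 1 (deriv y₂) := by
    have h := hy₂
    rw [show (2 : WithTop ℕ∞) = 1 + 1 from by norm_num, contDiff_succ_iff_deriv] at h
    exact h.2.2
  have hvC : ContDiff ℝ 1 v := by
    rw [hv]; exact (hvnew.sub hy₁d).sub hy₂d
  -- HasDerivAt facts
  have H1 : HasDerivAt y₁ (deriv y₁ t) t :=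
    ((hy₁.differentiable (by norm_num)) t).hasDerivAt
  have H2 : HasDerivAt y₂ (deriv y₂ t) t :=
    ((hy₂.differentiable (by norm_num)) t).hasDerivAt
  have H1' : HasDerivAt (deriv y₁) (deriv (deriv y₁) t) t :=
    ((hy₁d.differentiable one_ne_zero) t).hasDerivAt
  have H2' : HasDerivAt (deriv y₂) (deriv (deriv y₂) t) t :=
    ((hy₂d.differentiable one_ne_zero) t).hasDerivAt
  have Hv : HasDerivAt v (deriv v t) t :=
    ((hvC.differentiable one_ne_zero) t).hasDerivAt
  set a₁ := deriv y₁ t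
  set a₂ := deriv y₂ t
  set b₁ := deriv (deriv y₁) t
  set b₂ := deriv (deriv y₂) t
  set w := deriv v t
  -- derivative of Stot
  have hS : HasDerivAt Stot
      (((1/2) * (b₁ ⬝ᵥ (Λ₁ *ᵥ a₁) + a₁ ⬝ᵥ (Λ₁ *ᵥ b₁))
        + (1/2) * (a₁ ⬝ᵥ (K *ᵥ y₁ t) + y₁ t ⬝ᵥ (K *ᵥ a₁)))
      + ((1/2) * (b₂ ⬝ᵥ (Λ₂ *ᵥ a₂) + a₂ ⬝ᵥ (Λ₂ *ᵥ b₂))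
        + (1/2) * (a₂ ⬝ᵥ (K *ᵥ y₂ t) + y₂ t ⬝ᵥ (K *ᵥ a₂)))
      + (1/2) * (w ⬝ᵥ (M *ᵥ v t) + v t ⬝ᵥ (M *ᵥ w))) t := by
    rw [hStot]
    exact ((((dot_hasDerivAt Λ₁ H1' H1').const_mul (1/2)).add
            ((dot_hasDerivAt K H1 H1).const_mul (1/2))).add
          (((dot_hasDerivAt Λ₂ H2' H2').const_mul (1/2)).add
            ((dot_hasDerivAt K H2 H2).const_mul (1/2)))).add
          ((dot_hasDerivAt M Hv Hv).const_mul (1/2))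
  rw [hS.deriv]
  -- symmetry swaps
  have sΛ₁ : b₁ ⬝ᵥ (Λ₁ *ᵥ a₁) = a₁ ⬝ᵥ (Λ₁ *ᵥ b₁) := dot_symm_swap hΛ₁.1 b₁ a₁
  have sK₁ : y₁ t ⬝ᵥ (K *ᵥ a₁) = a₁ ⬝ᵥ (K *ᵥ y₁ t) := dot_symm_swap hK.1 _ _
  have sΛ₂ : b₂ ⬝ᵥ (Λ₂ *ᵥ a₂) = a₂ ⬝ᵥ (Λ₂ *ᵥ b₂) := dot_symm_swap hΛ₂.1 _ _
  have sK₂ : y₂ t ⬝ᵥ (K *ᵥ a₂) = a₂ ⬝ᵥ (K *ᵥ y₂ t) := dot_symm_swap hK.1 _ _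
  have sM : w ⬝ᵥ (M *ᵥ v t) = v t ⬝ᵥ (M *ᵥ w) := dot_symm_swap hM.1 _ _
  -- ODE consequences
  have e₁ : a₁ ⬝ᵥ (Λ₁ *ᵥ b₁) + a₁ ⬝ᵥ (K *ᵥ y₁ t)
      = a₁ ⬝ᵥ F t - a₁ ⬝ᵥ (D *ᵥ a₁) := by
    have h := hODE₁ t ht
    have : a₁ ⬝ᵥ (Λ₁ *ᵥ b₁ + D *ᵥ a₁ + K *ᵥ y₁ t) = a₁ ⬝ᵥ F t := by rw [h]
    simp only [dotProduct_add] at this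
    linarith
  have e₂ : a₂ ⬝ᵥ (Λ₂ *ᵥ b₂) + a₂ ⬝ᵥ (K *ᵥ y₂ t)
      = a₂ ⬝ᵥ F t - a₂ ⬝ᵥ (D *ᵥ a₂) := by
    have h := hODE₂ t ht
    have : a₂ ⬝ᵥ (Λ₂ *ᵥ b₂ + D *ᵥ a₂ + K *ᵥ y₂ t) = a₂ ⬝ᵥ F t := by rw [h]
    simp only [dotProduct_add] at this
    linarith
  have eM : v t ⬝ᵥ (M *ᵥ w) = vnew t ⬝ᵥ F t - a₁ ⬝ᵥ F t - a₂ ⬝ᵥ F t := by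
    rw [← hF t, hv]
    simp [sub_dotProduct]; rfl
  -- positivity
  have p₁ : 0 ≤ a₁ ⬝ᵥ (D *ᵥ a₁) := by
    have := hD.posSemidef.re_dotProduct_nonneg a₁
    simpa using this
  have p₂ : 0 ≤ a₂ ⬝ᵥ (D *ᵥ a₂) := by
    have := hD.posSemidef.re_dotProduct_nonneg a₂
    simpa using this
  rw [sΛ₁, sK₁, sΛ₂, sK₂, sM]
  linarith
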